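/- Let f be a proper lower semicontinuous convex function on ℝ^d and (x, x*) ∈ dom f × ℝ^d. Suppose there exists a dense subset D of ri(dom f) such that for every y ∈ D there exists y* ∈ ∂f(y) with ⟨y* − x*, y − x⟩ ≥ 0. Then x* ∈ ∂f(x). -/

import Mathlib

open Filter Topology MeasureTheory Set Metric RealInnerProductSpace
open scoped ENNReal NNReal

noncomputable section

def Proper {d : ℕ} (f : EuclideanSpace ℝ (Fin d) → EReal) : Prop :=
  (∀ x, f x ≠ ⊥) ∧ ∃ x, f x ≠ ⊤

def ConvexFn {d : ℕ} (f : EuclideanSpace ℝ (Fin d) → EReal) : Prop :=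
  Convex ℝ {p : EuclideanSpace ℝ (Fin d) × ℝ | f p.1 ≤ (p.2 : EReal)}

def Subdiff {d : ℕ} (f : EuclideanSpace ℝ (Fin d) → EReal) (x : EuclideanSpace ℝ (Fin d)) :
    Set (EuclideanSpace ℝ (Fin d)) :=
  {v | f x ≠ ⊤ ∧ ∀ y, f x + ((⟪v, y - x⟫ : ℝ) : EReal) ≤ f y}

def slopeFn {d : ℕ} (f : EuclideanSpace ℝ (Fin d) → EReal) (x : EuclideanSpace ℝ (Fin d)) : EReal :=
  sInf ((fun v => (‖v‖ : EReal)) '' Subdiff f x)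

def eLiminf {d : ℕ} (φ : ℕ → EuclideanSpace ℝ (Fin d) → EReal)
    (x : EuclideanSpace ℝ (Fin d)) : EReal :=
  ⨅ (u : ℕ → EuclideanSpace ℝ (Fin d)) (_ : Tendsto u atTop (𝓝 x)),
    Filter.liminf (fun n => φ n (u n)) atTop

def eLimsup {d : ℕ} (φ : ℕ → EuclideanSpace ℝ (Fin d) → EReal)
    (x : EuclideanSpace ℝ (Fin d)) : EReal :=
  ⨅ (u : ℕ → EuclideanSpace ℝ (Fin d)) (_ : Tendsto u atTop (𝓝 x)),
    Filter.limsup (fun n => φ n (u n)) atTop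

def EpiConv {d : ℕ} (φ : ℕ → EuclideanSpace ℝ (Fin d) → EReal)
    (ψ : EuclideanSpace ℝ (Fin d) → EReal) : Prop :=
  ∀ x, eLimsup φ x ≤ ψ x ∧ ψ x ≤ eLiminf φ x

def edom {d : ℕ} (h : EuclideanSpace ℝ (Fin d) → EReal) : Set (EuclideanSpace ℝ (Fin d)) :=
  {x | h x ≠ ⊤}

def rdom {d : ℕ} (h : EuclideanSpace ℝ (Fin d) → EReal) : Set (EuclideanSpace ℝ (Fin d)) :=
  {x | h x ≠ ⊤ ∧ h x ≠ ⊥}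

def domSub {d : ℕ} (f : EuclideanSpace ℝ (Fin d) → EReal) : Set (EuclideanSpace ℝ (Fin d)) :=
  {x | (Subdiff f x).Nonempty}

def erealToENNReal (x : EReal) : ℝ≥0∞ :=
  if x = ⊤ then ⊤ else ENNReal.ofReal x.toReal

abbrev Euc (d : ℕ) := EuclideanSpace ℝ (Fin d)

section helpers

variable {d : ℕ} {g : Euc d → EReal}

lemma fin1 (hb : ∀ z, g z ≠ ⊥) {a : Euc d} (ha : a ∈ edom g) :
    g a = (((g a).toReal : ℝ) : EReal) := (EReal.coe_toReal ha (hb a)).symm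

lemma convexOn_toReal (hb : ∀ z, g z ≠ ⊥) (hc : ConvexFn g) :
    ConvexOn ℝ (edom g) (fun w => (g w).toReal) := by
  constructor
  · intro a ha b hbb t s ht hs hts
    have hpa : (a, (g a).toReal) ∈ {p : Euc d × ℝ | g p.1 ≤ (p.2 : EReal)} :=
      (fin1 hb ha).le
    have hpb : (b, (g b).toReal) ∈ {p : Euc d × ℝ | g p.1 ≤ (p.2 : EReal)} :=
      (fin1 hb hbb).le
    have h := hc hpa hpb ht hs hts
    simp only [Prod.smul_mk, Prod.mk_add_mk, Set.mem_setOf_eq] at h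
    exact ne_top_of_le_ne_top (EReal.coe_ne_top _) h
  · intro a ha b hbb t s ht hs hts
    have hpa : (a, (g a).toReal) ∈ {p : Euc d × ℝ | g p.1 ≤ (p.2 : EReal)} :=
      (fin1 hb ha).le
    have hpb : (b, (g b).toReal) ∈ {p : Euc d × ℝ | g p.1 ≤ (p.2 : EReal)} :=
      (fin1 hb hbb).le
    have h := hc hpa hpb ht hs hts
    simp only [Prod.smul_mk, Prod.mk_add_mk, Set.mem_setOf_eq] at h
    have := EReal.toReal_le_toReal h (hb _) (EReal.coe_ne_top _)
    rw [EReal.toReal_coe] at this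
    simpa only [smul_eq_mul] using this

lemma subdiff_real (hb : ∀ z, g z ≠ ⊥) {w v z : Euc d} (hv : v ∈ Subdiff g w)
    (hz : z ∈ edom g) : (g w).toReal + ⟪v, z - w⟫ ≤ (g z).toReal := by
  have h := hv.2 z
  rw [fin1 hb hv.1, fin1 hb hz] at h
  exact_mod_cast h

end helpers

section helpers2

variable {d : ℕ} {g : Euc d → EReal}

lemma loc_bound (hb : ∀ z, g z ≠ ⊥) (hc : ConvexFn g)
    {ζ : Euc d} (hζ : ζ ∈ interior (edom g)) :
    ∃ δ : ℝ, 0 < δ ∧ ∃ M : ℝ, 0 ≤ M ∧ ball ζ δ ⊆ edom g ∧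
      ∀ w ∈ ball ζ δ, |(g w).toReal| ≤ M := by
  have hco := convexOn_toReal hb hc
  obtain ⟨K, t, ht, hK⟩ := hco.locallyLipschitzOn_interior hζ
  have hnh : t ∩ interior (edom g) ∈ 𝓝 ζ := by
    rw [nhdsWithin_eq_nhds.2 (isOpen_interior.mem_nhds hζ)] at ht
    exact inter_mem ht (isOpen_interior.mem_nhds hζ)
  obtain ⟨δ, hδ, hball⟩ := Metric.mem_nhds_iff.1 hnh
  have hζt : ζ ∈ t := (hball (mem_ball_self hδ)).1
  refine ⟨δ, hδ, (K : ℝ) * δ + |(g ζ).toReal|, by positivity, ?_, ?_⟩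
  · exact fun w hw => interior_subset (hball hw).2
  · intro w hw
    have hd := hK.dist_le_mul w (hball hw).1 ζ hζt
    have : |(g w).toReal| ≤ dist ((g w).toReal) ((g ζ).toReal) + |(g ζ).toReal| := by
      rw [Real.dist_eq]
      have := abs_sub_abs_le_abs_sub ((g w).toReal) ((g ζ).toReal)
      linarith
    have hdist : dist w ζ ≤ δ := (mem_ball.1 hw).le
    nlinarith [dist_nonneg (x := w) (y := ζ), K.coe_nonneg]

lemma subgrad_bound (hb : ∀ z, g z ≠ ⊥) {ζ : Euc d} {δ M : ℝ} (hδ : 0 < δ) (hM : 0 ≤ M)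
    (hsub : ball ζ δ ⊆ edom g) (hbd : ∀ w ∈ ball ζ δ, |(g w).toReal| ≤ M)
    {w : Euc d} (hw : w ∈ ball ζ (δ/2)) {v : Euc d} (hv : v ∈ Subdiff g w) :
    ‖v‖ ≤ 4 * M / δ := by
  rcases eq_or_ne v 0 with rfl | hv0
  · simp; positivity
  · set u : Euc d := ‖v‖⁻¹ • v with hu
    have hun : ‖u‖ = 1 := norm_smul_inv_norm hv0
    have hp : w + (δ/2) • u ∈ ball ζ δ := by
      have h1 : dist (w + (δ/2) • u) w = δ/2 := by
        rw [dist_eq_norm]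
        rw [add_sub_cancel_left, norm_smul, hun, mul_one, Real.norm_eq_abs,
          abs_of_pos (half_pos hδ)]
      calc dist (w + (δ/2) • u) ζ ≤ dist (w + (δ/2) • u) w + dist w ζ := dist_triangle _ _ _
        _ < δ/2 + δ/2 := by rw [h1]; linarith [mem_ball.1 hw]
        _ = δ := by ring
    have hwdom : w ∈ edom g := hsub (ball_subset_ball (by linarith) hw)
    have hkey := subdiff_real hb hv (hsub hp)
    have hinner : ⟪v, (w + (δ/2) • u) - w⟫ = (δ/2) * ‖v‖ := by
      rw [add_sub_cancel_left, hu, real_inner_smul_right, real_inner_smul_right,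
        real_inner_self_eq_norm_sq]
      have hn : ‖v‖ ≠ 0 := norm_ne_zero_iff.2 hv0
      field_simp [hn]
    rw [hinner] at hkey
    have h1 := hbd _ hp
    have h2 := hbd _ (ball_subset_ball (by linarith) hw)
    rw [abs_le] at h1 h2
    rw [le_div_iff₀ hδ]
    nlinarith [h1.1, h1.2, h2.1, h2.2]

set_option maxHeartbeats 1000000 in
lemma subdiff_closure (hb : ∀ z, g z ≠ ⊥) (hc : ConvexFn g)
    (hlsc : LowerSemicontinuous g) {ζ x u : Euc d} (hζ : ζ ∈ interior (edom g))
    {y : ℕ → Euc d} (hy : Tendsto y atTop (𝓝 ζ)) {v : ℕ → Euc d}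
    (hv : ∀ n, v n ∈ Subdiff g (y n)) (hm : ∀ n, 0 ≤ ⟪v n - u, y n - x⟫) :
    ∃ w ∈ Subdiff g ζ, 0 ≤ ⟪w - u, ζ - x⟫ := by
  obtain ⟨δ, hδ, M, hM, hsub, hbd⟩ := loc_bound hb hc hζ
  have hev : ∀ᶠ n in atTop, y n ∈ ball ζ (δ/2) :=
    hy.eventually_mem (ball_mem_nhds ζ (half_pos hδ))
  obtain ⟨N, hN⟩ := eventually_atTop.1 hev
  set C := 4 * M / δ with hC
  have hbound : ∀ n, v (n + N) ∈ closedBall (0 : Euc d) C := fun n => by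
    rw [mem_closedBall_zero_iff]
    exact subgrad_bound hb hδ hM hsub hbd (hN _ (Nat.le_add_left N n)) (hv (n + N))
  obtain ⟨w, -, φ, hφ, hwlim⟩ :=
    (isCompact_closedBall (0 : Euc d) C).tendsto_subseq hbound
  set Y : ℕ → Euc d := fun n => y (φ n + N) with hYdef
  set V : ℕ → Euc d := fun n => v (φ n + N) with hVdef
  have hidx : Tendsto (fun n => φ n + N) atTop atTop :=
    (tendsto_add_atTop_nat N).comp hφ.tendsto_atTop
  have hY : Tendsto Y atTop (𝓝 ζ) := hy.comp hidx
  have hV : Tendsto V atTop (𝓝 w) := hwlim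
  have hζdom : ζ ∈ edom g := hsub (mem_ball_self hδ)
  refine ⟨w, ⟨hζdom, ?_⟩, ?_⟩
  · intro z
    by_cases hz : g z = ⊤
    · rw [hz]; exact le_top
    · rw [fin1 hb hζdom, fin1 hb hz]
      have key : (g ζ).toReal + ⟪w, z - ζ⟫ ≤ (g z).toReal := by
        refine le_of_forall_pos_le_add fun ε hε => ?_
        have hlt : ((((g ζ).toReal - ε : ℝ)) : EReal) < g ζ := by
          rw [fin1 hb hζdom]
          exact_mod_cast sub_lt_self _ hε
        have hev2 : ∀ᶠ n in atTop, (((g ζ).toReal - ε : ℝ) : EReal) < g (Y n) :=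
          hY.eventually (hlsc ζ _ hlt)
        have hev3 : ∀ᶠ n in atTop, (g ζ).toReal - ε + ⟪V n, z - Y n⟫ ≤ (g z).toReal := by
          filter_upwards [hev2] with n hn
          have h1 := subdiff_real hb (hv (φ n + N)) hz
          have h2 : (g ζ).toReal - ε ≤ (g (Y n)).toReal := by
            have hYd : Y n ∈ edom g := (hv (φ n + N)).1
            rw [fin1 hb hYd] at hn
            exact_mod_cast hn.le
          have h1' : (g (Y n)).toReal + ⟪V n, z - Y n⟫ ≤ (g z).toReal := h1
          linarith
        have htend : Tendsto (fun n => (g ζ).toReal - ε + ⟪V n, z - Y n⟫) atTop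
            (𝓝 ((g ζ).toReal - ε + ⟪w, z - ζ⟫)) :=
          tendsto_const_nhds.add (hV.inner (tendsto_const_nhds.sub hY))
        have hfin := le_of_tendsto htend hev3
        linarith
      exact_mod_cast key
  · have htend : Tendsto (fun n => ⟪V n - u, Y n - x⟫) atTop (𝓝 ⟪w - u, ζ - x⟫) :=
      (hV.sub tendsto_const_nhds).inner (hY.sub tendsto_const_nhds)
    exact ge_of_tendsto htend (Eventually.of_forall fun n => hm (φ n + N))

set_option maxHeartbeats 1000000 in
lemma interior_subgrad (hb : ∀ z, g z ≠ ⊥) (hc : ConvexFn g)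
    (hlsc : LowerSemicontinuous g) {x u : Euc d} (hx : x ∈ edom g)
    (H : ∀ ζ ∈ interior (edom g), ∃ w ∈ Subdiff g ζ, 0 ≤ ⟪w - u, ζ - x⟫) :
    ∀ z ∈ interior (edom g), (g x).toReal + ⟪u, z - x⟫ ≤ (g z).toReal := by
  intro z hz
  have hcvx : Convex ℝ (edom g) := (convexOn_toReal hb hc).1
  set t : ℕ → ℝ := fun n => 1 / (n + 1) with ht
  have ht0 : ∀ n, 0 < t n := fun n => by positivity
  have ht1 : ∀ n, t n ≤ 1 := fun n => by
    rw [ht]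
    rw [div_le_one (by positivity)]
    simp
  set y : ℕ → Euc d := fun n => x + t n • (z - x) with hy
  have hymem : ∀ n, y n ∈ interior (edom g) := by
    intro n
    have hcombo : y n = (1 - t n) • x + t n • z := by
      rw [hy]; module
    rw [hcombo]
    exact hcvx.combo_self_interior_mem_interior hx hz (by linarith [ht1 n]) (ht0 n)
      (by ring)
  have hsel : ∀ n, ∃ w ∈ Subdiff g (y n), 0 ≤ ⟪w - u, y n - x⟫ := fun n => H _ (hymem n)
  choose w hw hwm using hsel
  set c : ℝ := ⟪u, z - x⟫ with hcdef
  have hkey : ∀ n, (g (y n)).toReal + (1 - t n) * c ≤ (g z).toReal := by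
    intro n
    have hyx : y n - x = t n • (z - x) := by rw [hy]; module
    have hinner : ⟪w n, z - x⟫ ≥ c := by
      have h0 := hwm n
      rw [hyx, real_inner_smul_right] at h0
      have h1 : 0 ≤ ⟪w n - u, z - x⟫ := nonneg_of_mul_nonneg_right h0 (ht0 n)
      rw [inner_sub_left] at h1
      linarith
    have hzy : z - y n = (1 - t n) • (z - x) := by
      rw [hy]; module
    have hzdom : z ∈ edom g := interior_subset hz
    have h2 := subdiff_real hb (hw n) hzdom
    rw [hzy, real_inner_smul_right] at h2
    nlinarith [ht1 n, ht0 n]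
  refine le_of_forall_pos_le_add fun ε hε => ?_
  have hylim : Tendsto y atTop (𝓝 x) := by
    have h1 : Tendsto t atTop (𝓝 0) := tendsto_one_div_add_atTop_nhds_zero_nat
    have h2 : Tendsto (fun n => t n • (z - x)) atTop (𝓝 ((0:ℝ) • (z - x))) :=
      h1.smul_const _
    rw [zero_smul] at h2
    simpa using tendsto_const_nhds.add h2
  have hlt : ((((g x).toReal - ε : ℝ)) : EReal) < g x := by
    rw [fin1 hb hx]
    exact_mod_cast sub_lt_self _ hε
  have hev : ∀ᶠ n in atTop, (g x).toReal - ε ≤ (g (y n)).toReal := by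
    filter_upwards [hylim.eventually (hlsc x _ hlt)] with n hn
    have hyd : y n ∈ edom g := interior_subset (hymem n)
    rw [fin1 hb hyd] at hn
    exact_mod_cast hn.le
  have hev2 : ∀ᶠ n in atTop, (g x).toReal - ε + (1 - t n) * c ≤ (g z).toReal := by
    filter_upwards [hev] with n hn
    linarith [hkey n]
  have htend : Tendsto (fun n => (g x).toReal - ε + (1 - t n) * c) atTop
      (𝓝 ((g x).toReal - ε + (1 - 0) * c)) :=
    tendsto_const_nhds.add (((tendsto_const_nhds.sub
      tendsto_one_div_add_atTop_nhds_zero_nat).mul_const c))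
  have := le_of_tendsto htend hev2
  simp only [sub_zero, one_mul] at this
  linarith

end helpers2


set_option maxHeartbeats 1000000 in
theorem subdiff_from_dense_monotonicity {d : ℕ} (f : EuclideanSpace ℝ (Fin d) → EReal)
    (hprop : Proper f) (hconv : ConvexFn f) (hlsc : LowerSemicontinuous f)
    (x xstar : EuclideanSpace ℝ (Fin d)) (hx : x ∈ edom f)
    (D : Set (EuclideanSpace ℝ (Fin d))) (hD1 : D ⊆ intrinsicInterior ℝ (edom f))
    (hD2 : intrinsicInterior ℝ (edom f) ⊆ closure D)
    (hmon : ∀ y ∈ D, ∃ ystar ∈ Subdiff f y, (0:ℝ) ≤ ⟪ystar - xstar, y - x⟫) :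
    xstar ∈ Subdiff f x := by
  obtain ⟨hbot, -⟩ := hprop
  set A : AffineSubspace ℝ (Euc d) := affineSpan ℝ (edom f) with hA
  set L : Submodule ℝ (Euc d) := A.direction with hL
  set P : Euc d →L[ℝ] L := L.orthogonalProjectionOnto with hP
  set prj : Euc d → Euc d := fun w => x + (P (w - x) : Euc d) with hprj
  set F : Euc d → EReal := fun w => f (prj w) with hF
  have memA : ∀ a ∈ edom f, a ∈ A := fun a ha => subset_affineSpan ℝ _ ha
  have hxA : x ∈ A := memA x hx
  have memL : ∀ w ∈ A, w - x ∈ L := fun w hw => by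
    simpa [vsub_eq_sub] using AffineSubspace.vsub_mem_direction hw hxA
  have Pfix : ∀ q ∈ L, ((P q : Euc d)) = q := fun q hq =>
    L.starProjection_eq_self_iff.2 hq
  have prjfix : ∀ w ∈ A, prj w = w := fun w hw => by
    rw [hprj]; simp only; rw [Pfix _ (memL w hw)]; abel
  have prjspan : ∀ w, prj w ∈ A := fun w => by
    have h := AffineSubspace.vadd_mem_of_mem_direction (P (w - x)).2 hxA
    rw [vadd_eq_add, add_comm] at h
    exact h
  have horth : ∀ q : Euc d, q - (P q : Euc d) ∈ Lᗮ := fun q =>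
    L.sub_starProjection_mem_orthogonal q
  have hinner0 : ∀ e : Euc d, e ∈ Lᗮ → ∀ l ∈ L, ⟪e, l⟫ = 0 := fun e he l hl =>
    (Submodule.mem_orthogonal' L e).1 he l hl
  have prj_sub : ∀ w₁ w₂ : Euc d, prj w₁ - prj w₂ = (P (w₁ - w₂) : Euc d) := by
    intro w₁ w₂
    show x + (P (w₁ - x) : Euc d) - (x + (P (w₂ - x) : Euc d)) = _
    have e1 : w₁ - w₂ = (w₁ - x) - (w₂ - x) := by abel
    conv_rhs => rw [e1, map_sub]
    rw [Submodule.coe_sub]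
    abel
  have prj_add_mem : ∀ (w l : Euc d), l ∈ L → prj (w + l) = prj w + l := by
    intro w l hl
    show x + (P (w + l - x) : Euc d) = x + (P (w - x) : Euc d) + l
    have e1 : w + l - x = (w - x) + l := by abel
    rw [e1, map_add, Submodule.coe_add, Pfix _ hl]
    abel
  have prjcombo : ∀ (a b : ℝ), a + b = 1 → ∀ p q : Euc d,
      prj (a • p + b • q) = a • prj p + b • prj q := by
    intro a b hab p q
    rw [hprj]
    simp only
    have h1 : a • p + b • q - x = a • (p - x) + b • (q - x) := by
      match_scalars <;> linarith
    rw [h1, map_add, _root_.map_smul, _root_.map_smul, Submodule.coe_add, Submodule.coe_smul,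
      Submodule.coe_smul]
    match_scalars <;> linarith
  have Fb : ∀ w, F w ≠ ⊥ := fun w => hbot _
  have hFA : ∀ w ∈ A, F w = f w := fun w hw => by rw [hF]; simp only; rw [prjfix w hw]
  have hFx : F x = f x := hFA x hxA
  have hxF : x ∈ edom F := by show F x ≠ ⊤; rw [hFx]; exact hx
  have FconvexFn : ConvexFn F := by
    intro p hp q hq a b ha hb' hab
    simp only [Set.mem_setOf_eq] at hp hq ⊢
    show F (a • p + b • q).1 ≤ (((a • p + b • q).2 : ℝ) : EReal)
    have h1 : (a • p + b • q).1 = a • p.1 + b • q.1 := rfl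
    have h2 : (a • p + b • q).2 = a * p.2 + b * q.2 := rfl
    rw [h1, h2, hF]
    simp only
    rw [prjcombo a b hab p.1 q.1]
    have hp' : (prj p.1, p.2) ∈ {r : Euc d × ℝ | f r.1 ≤ (r.2 : EReal)} := hp
    have hq' : (prj q.1, q.2) ∈ {r : Euc d × ℝ | f r.1 ≤ (r.2 : EReal)} := hq
    exact hconv hp' hq' ha hb' hab
  have Flsc : LowerSemicontinuous F := by
    have hcont : Continuous prj := by
      apply continuous_const.add
      exact (continuous_subtype_val.comp P.continuous).comp (continuous_id.sub continuous_const)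
    exact hlsc.comp hcont
  have normP : ∀ q : Euc d, ‖(P q : Euc d)‖ ≤ ‖q‖ := by
    intro q
    have h1 : ‖P q‖ ≤ ‖P‖ * ‖q‖ := P.le_opNorm q
    have h2 : ‖P‖ ≤ 1 := L.orthogonalProjectionOnto_norm_le
    have h3 : ‖(P q : Euc d)‖ = ‖P q‖ := rfl
    nlinarith [norm_nonneg q, norm_nonneg (P q)]
  have claim1 : intrinsicInterior ℝ (edom f) ⊆ interior (edom F) := by
    intro q hq
    obtain ⟨q', hq', rfl⟩ := mem_intrinsicInterior.1 hq
    have hqA : (q' : Euc d) ∈ A := q'.2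
    have hmem : ((↑) ⁻¹' (edom f) : Set (affineSpan ℝ (edom f))) ∈ 𝓝 q' :=
      mem_interior_iff_mem_nhds.1 hq'
    rw [nhds_subtype_eq_comap, mem_comap] at hmem
    obtain ⟨tt, htt, hsub⟩ := hmem
    obtain ⟨ε, hε, hballt⟩ := Metric.mem_nhds_iff.1 htt
    have hball : ∀ p, p ∈ A → p ∈ ball (q' : Euc d) ε → p ∈ edom f := by
      intro p hpA hp
      exact hsub (show (⟨p, hpA⟩ : affineSpan ℝ (edom f)) ∈ (↑) ⁻¹' tt from hballt hp)
    have hsubF : ball (q' : Euc d) ε ⊆ edom F := by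
      intro w hw
      have h1 : prj w - (q' : Euc d) = (P (w - (q' : Euc d)) : Euc d) := by
        conv_lhs => rw [← prjfix _ hqA]
        exact prj_sub w _
      have h2 : dist (prj w) (q' : Euc d) < ε := by
        rw [dist_eq_norm, h1]
        calc ‖(P (w - (q' : Euc d)) : Euc d)‖ ≤ ‖w - (q' : Euc d)‖ := normP _
          _ < ε := by rw [← dist_eq_norm]; exact hw
      exact hball (prj w) (prjspan w) (mem_ball.2 h2)
    exact mem_interior.2 ⟨ball _ ε, hsubF, isOpen_ball, mem_ball_self hε⟩
  have claim2 : ∀ ζ ∈ interior (edom F), prj ζ ∈ intrinsicInterior ℝ (edom f) := by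
    intro ζ hζ
    obtain ⟨ε, hε, hball⟩ := Metric.mem_nhds_iff.1 (mem_interior_iff_mem_nhds.1 hζ)
    refine mem_intrinsicInterior.2 ⟨⟨prj ζ, prjspan ζ⟩, ?_, rfl⟩
    rw [mem_interior_iff_mem_nhds]
    have hb2 : ((↑) ⁻¹' (ball (prj ζ) ε) : Set (affineSpan ℝ (edom f))) ∈
        𝓝 (⟨prj ζ, prjspan ζ⟩ : affineSpan ℝ (edom f)) :=
      (continuous_subtype_val.continuousAt).preimage_mem_nhds (ball_mem_nhds _ hε)
    refine Filter.mem_of_superset hb2 ?_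
    rintro ⟨p, hpA⟩ hp
    simp only [Set.mem_preimage] at hp ⊢
    have hw : ζ + (p - prj ζ) ∈ ball ζ ε := by
      rw [mem_ball, dist_eq_norm]
      rw [show ζ + (p - prj ζ) - ζ = p - prj ζ by abel, ← dist_eq_norm]
      exact hp
    have hwF : ζ + (p - prj ζ) ∈ edom F := hball hw
    have hpL : p - prj ζ ∈ L := by
      simpa [vsub_eq_sub] using AffineSubspace.vsub_mem_direction hpA (prjspan ζ)
    have hkey : prj (ζ + (p - prj ζ)) = p := by
      rw [prj_add_mem _ _ hpL]
      abel
    have : F (ζ + (p - prj ζ)) = f p := by rw [hF]; simp only; rw [hkey]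
    rw [show (edom f) = {r : Euc d | f r ≠ ⊤} from rfl]
    have hne : F (ζ + (p - prj ζ)) ≠ ⊤ := hwF
    rw [this] at hne
    exact hne
  have hPe0 : ∀ e ∈ (Lᗮ : Submodule ℝ (Euc d)), (P e : Euc d) = 0 := by
    intro e he
    have h : P e = (0 : L) := Submodule.orthogonalProjectionOnto_eq_zero_iff.2 he
    rw [h]
    rfl
  have prj_add_orth : ∀ (w l : Euc d), l ∈ Lᗮ → prj (w + l) = prj w := by
    intro w l hl
    show x + (P (w + l - x) : Euc d) = x + (P (w - x) : Euc d)
    have e1 : w + l - x = (w - x) + l := by abel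
    rw [e1, map_add, Submodule.coe_add, hPe0 l hl]
    abel
  have htransfer : ∀ yy : Euc d, yy ∈ edom f → ∀ vv ∈ Subdiff f yy,
      ∀ e ∈ (Lᗮ : Submodule ℝ (Euc d)), (P vv : Euc d) ∈ Subdiff F (yy + e) := by
    intro yy hyy vv hvv e he
    have hyyA : yy ∈ A := memA _ hyy
    have hprj_ye : prj (yy + e) = yy := by rw [prj_add_orth _ _ he, prjfix _ hyyA]
    have hFyye : F (yy + e) = f yy := by show f (prj (yy + e)) = f yy; rw [hprj_ye]
    refine ⟨?_, ?_⟩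
    · show F (yy + e) ≠ ⊤
      rw [hFyye]; exact hyy
    · intro z
      have h1 := hvv.2 (prj z)
      have hinner : ⟪vv, prj z - yy⟫ = ⟪(P vv : Euc d), z - (yy + e)⟫ := by
        have hL1 : prj z - yy ∈ L := by
          simpa [vsub_eq_sub] using AffineSubspace.vsub_mem_direction (prjspan z) hyyA
        have e1 : ⟪vv - (P vv : Euc d), prj z - yy⟫ = 0 := hinner0 _ (horth vv) _ hL1
        have hdiff : (z - (yy + e)) - (prj z - yy) ∈ Lᗮ := by
          have e2 : (z - (yy + e)) - (prj z - yy) = (z - prj z) - e := by abel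
          rw [e2]
          refine Submodule.sub_mem _ ?_ he
          have e3 : z - prj z = (z - x) - (P (z - x) : Euc d) := by
            show z - (x + (P (z - x) : Euc d)) = _
            abel
          rw [e3]; exact horth _
        have e4 : ⟪(P vv : Euc d), (z - (yy + e)) - (prj z - yy)⟫ = 0 := by
          rw [real_inner_comm]; exact hinner0 _ hdiff _ (P vv).2
        rw [inner_sub_left] at e1
        rw [inner_sub_right] at e4
        linarith
      show F (yy + e) + ((⟪(P vv : Euc d), z - (yy + e)⟫ : ℝ) : EReal) ≤ F z
      rw [hFyye, ← hinner]
      exact h1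
  set U : Euc d := (P xstar : Euc d) with hU
  have H : ∀ ζ ∈ interior (edom F), ∃ w ∈ Subdiff F ζ, 0 ≤ ⟪w - U, ζ - x⟫ := by
    intro ζ hζ
    obtain ⟨y, hyD, hylim⟩ := mem_closure_iff_seq_limit.1 (hD2 (claim2 ζ hζ))
    have heL : ζ - prj ζ ∈ Lᗮ := by
      have e3 : ζ - prj ζ = (ζ - x) - (P (ζ - x) : Euc d) := by
        show ζ - (x + (P (ζ - x) : Euc d)) = _
        abel
      rw [e3]; exact horth _
    choose v hv hvm using fun n => hmon (y n) (hyD n)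
    have hydom : ∀ n, y n ∈ edom f := fun n => intrinsicInterior_subset (hD1 (hyD n))
    have hYlim : Tendsto (fun n => y n + (ζ - prj ζ)) atTop (𝓝 ζ) := by
      have h2 := hylim.add_const (ζ - prj ζ)
      rw [show prj ζ + (ζ - prj ζ) = ζ by abel] at h2
      exact h2
    have hYsub : ∀ n, (P (v n) : Euc d) ∈ Subdiff F (y n + (ζ - prj ζ)) :=
      fun n => htransfer (y n) (hydom n) (v n) (hv n) _ heL
    have hYm : ∀ n, 0 ≤ ⟪(P (v n) : Euc d) - U, (y n + (ζ - prj ζ)) - x⟫ := by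
      intro n
      have hl : y n - x ∈ L := memL _ (memA _ (hydom n))
      have h1 : ⟪(P (v n) : Euc d) - U, ζ - prj ζ⟫ = 0 := by
        rw [real_inner_comm]
        exact hinner0 _ heL _ (Submodule.sub_mem L (P (v n)).2 (P xstar).2)
      have h2 : ⟪(P (v n) : Euc d) - U, y n - x⟫ = ⟪v n - xstar, y n - x⟫ := by
        have hdiff : (v n - xstar) - ((P (v n) : Euc d) - U) ∈ Lᗮ := by
          have e5 : (v n - xstar) - ((P (v n) : Euc d) - U) =
              (v n - (P (v n) : Euc d)) - (xstar - U) := by abel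
          rw [e5]
          exact Submodule.sub_mem _ (horth _) (by rw [hU]; exact horth xstar)
        have h3 := hinner0 _ hdiff _ hl
        rw [inner_sub_left] at h3
        linarith
      rw [show (y n + (ζ - prj ζ)) - x = (y n - x) + (ζ - prj ζ) by abel,
        inner_add_right, h1, h2, add_zero]
      exact hvm n
    exact subdiff_closure Fb FconvexFn Flsc hζ hYlim hYsub hYm
  have concl := interior_subgrad Fb FconvexFn Flsc hxF H
  refine ⟨hx, fun z => ?_⟩
  by_cases hz : f z = ⊤
  · rw [hz]; exact le_top
  · have hzdom : z ∈ edom f := hz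
    have hzA : z ∈ A := memA _ hzdom
    obtain ⟨w₀, hw₀⟩ := Set.Nonempty.intrinsicInterior ((convexOn_toReal hbot hconv).1) ⟨x, hx⟩
    have hw₀F : w₀ ∈ interior (edom F) := claim1 hw₀
    have hw₀Fdom : w₀ ∈ edom F := interior_subset hw₀F
    have hzF : z ∈ edom F := by show F z ≠ ⊤; rw [hFA z hzA]; exact hz
    have hFco := convexOn_toReal Fb FconvexFn
    have hUinner : ⟪U, z - x⟫ = ⟪xstar, z - x⟫ := by
      have hdiff : xstar - U ∈ Lᗮ := by rw [hU]; exact horth xstar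
      have h3 := hinner0 _ hdiff _ (memL _ hzA)
      rw [inner_sub_left] at h3
      linarith
    have hkey : ∀ n : ℕ, (F x).toReal + (⟪U, z - x⟫ + (1/((n:ℝ)+1)) * ⟪U, w₀ - z⟫)
        ≤ (1 - 1/((n:ℝ)+1)) * (F z).toReal + (1/((n:ℝ)+1)) * (F w₀).toReal := by
      intro n
      set t : ℝ := 1/((n:ℝ)+1) with htdef
      have ht0 : 0 < t := by positivity
      have ht1 : t ≤ 1 := by rw [htdef, div_le_one (by positivity)]; simp
      have hztF : (1 - t) • z + t • w₀ ∈ interior (edom F) :=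
        hFco.1.combo_self_interior_mem_interior hzF hw₀F (by linarith) ht0 (by ring)
      have h1 := concl _ hztF
      have h2 := hFco.2 hzF hw₀Fdom (by linarith : (0:ℝ) ≤ 1 - t) ht0.le (by ring)
      simp only [smul_eq_mul] at h2
      have h3 : ⟪U, ((1 - t) • z + t • w₀) - x⟫ = ⟪U, z - x⟫ + t * ⟪U, w₀ - z⟫ := by
        have e6 : ((1 - t) • z + t • w₀) - x = (z - x) + t • (w₀ - z) := by
          match_scalars <;> ring
        rw [e6, inner_add_right, real_inner_smul_right]
      rw [h3] at h1
      linarith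
    have h0 : Tendsto (fun n : ℕ => 1/((n:ℝ)+1)) atTop (𝓝 0) :=
      tendsto_one_div_add_atTop_nhds_zero_nat
    have htend : Tendsto (fun n : ℕ => (1 - 1/((n:ℝ)+1)) * (F z).toReal
        + (1/((n:ℝ)+1)) * (F w₀).toReal) atTop
        (𝓝 ((1-0) * (F z).toReal + 0 * (F w₀).toReal)) :=
      ((tendsto_const_nhds.sub h0).mul_const _).add (h0.mul_const _)
    have htend2 : Tendsto (fun n : ℕ => (F x).toReal
        + (⟪U, z - x⟫ + (1/((n:ℝ)+1)) * ⟪U, w₀ - z⟫)) atTop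
        (𝓝 ((F x).toReal + (⟪U, z - x⟫ + 0 * ⟪U, w₀ - z⟫))) :=
      tendsto_const_nhds.add (tendsto_const_nhds.add (h0.mul_const _))
    have hfinal := le_of_tendsto_of_tendsto' htend2 htend hkey
    simp only [zero_mul, add_zero, one_mul, sub_zero] at hfinal
    have hFzz : (F z).toReal = (f z).toReal := by rw [hFA z hzA]
    have hFxx : (F x).toReal = (f x).toReal := by rw [hFx]
    rw [hFzz, hFxx, hUinner] at hfinal
    rw [fin1 hbot hx, fin1 hbot hzdom]
    exact_mod_cast hfinal
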